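/- For q ∈ [1,3] and σ̂ with cos(σ̂π/2) = √q/2, one has cos(3σ̂π/2) ≤ 0, hence for any real numbers a_x ∈ [0,1], |2(e^{3iσ̂π/2} − 1) + (Σ_x 2a_x)(e^{iσ̂π/2} − e^{iσ̂π})·cos(3σ̂π/2)| ≥ 2|e^{iσ̂π/2} − 1|·(1 + √q). -/

import Mathlib

open Real

set_option maxHeartbeats 1000000

/-- For `q ∈ [1,3]` and `σ̂` with `cos(σ̂π/2) = √q/2`, one has `cos(3σ̂π/2) ≤ 0`, and for
any finitely many numbers `a_x ∈ [0,1]`,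
`|2(e^{3iσ̂π/2} − 1) + (Σ_x 2a_x)(e^{iσ̂π/2} − e^{iσ̂π})·cos(3σ̂π/2)| ≥ 2|e^{iσ̂π/2} − 1|(1+√q)`. -/
theorem stmt4 (q σ : ℝ) (hq1 : 1 ≤ q) (hq3 : q ≤ 3) (hσ0 : 0 < σ) (hσ1 : σ ≤ 1)
    (hcos : Real.cos (σ * π / 2) = Real.sqrt q / 2) :
    Real.cos (3 * (σ * π / 2)) ≤ 0 ∧
    ∀ (ι : Type) (_ : Fintype ι) (a : ι → ℝ), (∀ x, a x ∈ Set.Icc (0:ℝ) 1) →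
      2 * ‖Complex.exp (Complex.I * (σ * π / 2)) - 1‖ * (1 + Real.sqrt q) ≤
        ‖2 * (Complex.exp (Complex.I * (3 * (σ * π / 2))) - 1) +
          ((∑ x : ι, 2 * a x : ℝ) : ℂ) *
            (Complex.exp (Complex.I * (σ * π / 2)) - Complex.exp (Complex.I * (σ * π))) *
            ((Real.cos (3 * (σ * π / 2)) : ℝ) : ℂ)‖ := by
  have hq0 : (0:ℝ) ≤ q := by linarith
  have hsq : Real.sqrt q ^ 2 = q := Real.sq_sqrt hq0
  have hsqnn : 0 ≤ Real.sqrt q := Real.sqrt_nonneg q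
  -- Part 1
  have hc3 : Real.cos (3 * (σ * π / 2)) ≤ 0 := by
    rw [Real.cos_three_mul, hcos]
    nlinarith [hsq, hsqnn]
  refine ⟨hc3, ?_⟩
  intro ι _ a ha
  set x : ℝ := σ * π / 4 with hx
  -- basic facts about x
  have hπ := Real.pi_pos
  have hx0 : 0 ≤ x := by positivity
  have hxπ : 3 * x ≤ π := by
    rw [hx]; nlinarith
  have hs1n : 0 ≤ Real.sin x := Real.sin_nonneg_of_nonneg_of_le_pi hx0 (by linarith)
  -- sqrt q = 2 - 4 sin^2 x
  have hc2 : Real.cos (2 * x) = Real.sqrt q / 2 := by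
    rw [show 2 * x = σ * π / 2 by rw [hx]; ring]; exact hcos
  have hcm := Real.cos_two_mul x
  have hpy := Real.sin_sq_add_cos_sq x
  have hsqeq : Real.sqrt q = 2 - 4 * Real.sin x ^ 2 := by nlinarith [hc2, hcm, hpy]
  -- sin(3x) = sin x (1 + sqrt q)
  have hsin3 : Real.sin (3 * x) = Real.sin x * (1 + Real.sqrt q) := by
    rw [Real.sin_three_mul, hsqeq]; ring
  have hs3n : 0 ≤ Real.sin (3 * x) := by
    rw [hsin3]; positivity
  -- complex exponentials
  set u : ℂ := Complex.exp (Complex.I * ((x : ℝ) : ℂ)) with hu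
  set v : ℂ := Complex.exp (-(Complex.I * ((x : ℝ) : ℂ))) with hvdef
  have huv : u * v = 1 := by
    rw [hu, hvdef, ← Complex.exp_add, add_neg_cancel, Complex.exp_zero]
  have hu0 : u ≠ 0 := Complex.exp_ne_zero _
  have hv : v = u⁻¹ := by
    field_simp
    linear_combination huv
  have key : ∀ (n : ℕ) (r : ℝ), r = n * x → Complex.exp (Complex.I * r) = u ^ n := by
    intro n r hr
    rw [hu, ← Complex.exp_nat_mul]
    congr 1
    rw [hr]; push_cast; ring
  have keyneg : ∀ (n : ℕ) (r : ℝ), r = n * x →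
      Complex.exp (-((r : ℝ) : ℂ) * Complex.I) = v ^ n := by
    intro n r hr
    rw [hvdef, ← Complex.exp_nat_mul]
    congr 1
    rw [hr]; push_cast; ring
  have e1 : Complex.exp (Complex.I * ((σ:ℂ) * (π:ℂ) / 2)) = u ^ 2 := by
    rw [show Complex.I * ((σ:ℂ) * (π:ℂ) / 2) = Complex.I * ((σ * π / 2 : ℝ) : ℂ) by
      push_cast; ring]
    exact key 2 _ (by rw [hx]; ring)
  have e2 : Complex.exp (Complex.I * ((σ:ℂ) * (π:ℂ))) = u ^ 4 := by
    rw [show Complex.I * ((σ:ℂ) * (π:ℂ)) = Complex.I * ((σ * π : ℝ) : ℂ) by push_cast; ring]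
    exact key 4 _ (by rw [hx]; ring)
  have e3 : Complex.exp (Complex.I * (3 * ((σ:ℂ) * (π:ℂ) / 2))) = u ^ 6 := by
    rw [show Complex.I * (3 * ((σ:ℂ) * (π:ℂ) / 2)) = Complex.I * ((3 * (σ * π / 2) : ℝ) : ℂ) by
      push_cast; ring]
    exact key 6 _ (by rw [hx]; ring)
  -- sines as complex
  have hsgen : ∀ (n : ℕ) (r : ℝ), r = n * x →
      ((Real.sin r : ℝ) : ℂ) = (v ^ n - u ^ n) * Complex.I / 2 := by
    intro n r hr
    rw [Complex.ofReal_sin, Complex.sin, keyneg n r hr, ← key n r hr]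
    rw [show ((r : ℝ) : ℂ) * Complex.I = Complex.I * ((r : ℝ) : ℂ) by ring]
  have hs1 : ((Real.sin x : ℝ) : ℂ) = (v - u) * Complex.I / 2 := by
    have := hsgen 1 x (by ring); simpa using this
  have hs3 : ((Real.sin (3 * x) : ℝ) : ℂ) = (v ^ 3 - u ^ 3) * Complex.I / 2 := hsgen 3 _ rfl
  have hs1c : Complex.sin ((x : ℝ) : ℂ) = (v - u) * Complex.I / 2 := by
    rw [← Complex.ofReal_sin]; exact hs1
  have hs3c : Complex.sin (3 * ((x : ℝ) : ℂ)) = (v ^ 3 - u ^ 3) * Complex.I / 2 := by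
    rw [show 3 * ((x : ℝ) : ℂ) = ((3 * x : ℝ) : ℂ) by push_cast; ring, ← Complex.ofReal_sin]
    exact hs3
  set S : ℝ := ∑ x : ι, 2 * a x with hS
  have hSnn : 0 ≤ S := Finset.sum_nonneg fun i _ => by have := (ha i).1; linarith
  set c : ℝ := Real.cos (3 * (σ * π / 2)) with hcdef
  -- main factorization
  have hZ : 2 * ((u ^ 6 : ℂ) - 1) + (S : ℂ) * (u ^ 2 - u ^ 4) * (c : ℂ)
      = u ^ 3 * Complex.I * (((4 * Real.sin (3 * x) - 2 * S * c * Real.sin x : ℝ)) : ℂ) := by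
    push_cast
    rw [hs1c, hs3c, hv]
    field_simp
    ring_nf
    rw [Complex.I_sq]
    ring
  have hE : (u ^ 2 : ℂ) - 1 = u * Complex.I * (((2 * Real.sin x : ℝ)) : ℂ) := by
    push_cast
    rw [hs1c, hv]
    field_simp
    ring_nf
    rw [Complex.I_sq]
    ring
  have habsu : ‖u‖ = 1 := by
    rw [hu]
    simp [Complex.norm_exp]
  clear_value S c
  clear_value u v
  -- final computation
  rw [e1, e2, e3, hE, hZ]
  rw [norm_mul, norm_mul, norm_mul, norm_mul, habsu, norm_pow, habsu, Complex.norm_I,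
    Complex.norm_real, Complex.norm_real, Real.norm_eq_abs, Real.norm_eq_abs]
  rw [abs_of_nonneg (by positivity : (0:ℝ) ≤ 2 * Real.sin x),
    abs_of_nonneg (by nlinarith [mul_nonneg (mul_nonneg hSnn (neg_nonneg.2 hc3)) hs1n]
      : (0:ℝ) ≤ 4 * Real.sin (3 * x) - 2 * S * c * Real.sin x)]
  have : -2 * S * c * Real.sin x ≥ 0 := by
    nlinarith [mul_nonneg (mul_nonneg hSnn (neg_nonneg.2 hc3)) hs1n]
  nlinarith [hsin3]
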